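/- Let K/F be a cyclic field extension of degree n with Gal(K/F) = ⟨σ⟩, R = K[t;σ], and f = Σ_{i=0}^{m} a_i tⁱ ∈ R monic irreducible of degree m with gcrd(f,t) = 1 and deg(h) = mn. Let ν ∈ K, ρ ∈ Aut(K), F' = Fix(ρ) ∩ F with F/F' finite. Then the algebra S(ν,ρ,f) = (R_m,∘), with multiplication b∘c = (b(t) + νρ(b₀)t^m)·c(t) mod_r f, is a division algebra over F' if N_{K/F'}(a₀)·N_{K/F'}(ν) ≠ 1. -/

import Mathlib

namespace SkewPaper

/-- Data presenting a ring `R` as a skew polynomial ring `D[t;σ]` over a division ring `D`: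
`ι` embeds `D`, `t` is the variable, `t * ι a = ι (σ a) * t`, and every element of `R`
is uniquely a finite sum `∑ ι (coeff f i) * t^i`. -/
structure SkewPolyData (D R : Type*) [DivisionRing D] [Ring R] where
  σ : D ≃+* D
  ι : D →+* R
  t : R
  coeff : R → ℕ → D
  twist : ∀ a : D, t * ι a = ι (σ a) * t
  support_finite : ∀ f : R, (Function.support (coeff f)).Finite
  coeff_ext : ∀ f g : R, (∀ i, coeff f i = coeff g i) → f = g
  coeff_sum : ∀ (c : ℕ →₀ D) (i : ℕ),
    coeff (∑ j ∈ c.support, ι (c j) * t ^ j) i = c i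

/-- Two elements are similar if the left modules `R/Rf` and `R/Rg` are isomorphic. -/
def Sim {R : Type*} [Ring R] (f g : R) : Prop :=
  Nonempty ((R ⧸ Submodule.span R {f}) ≃ₗ[R] (R ⧸ Submodule.span R {g}))

/-- `g` divides `f` on the right. -/
def RDvd {R : Type*} [Ring R] (g f : R) : Prop := ∃ q, f = q * g

/-- `g` divides `f` on the left. -/
def LDvd {R : Type*} [Ring R] (g f : R) : Prop := ∃ q, f = g * q

/-- `Rf` is a two-sided ideal. -/
def RightInvariant {R : Type*} [Ring R] (f : R) : Prop := ∀ r : R, ∃ q, f * r = q * f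

/-- `g` is a greatest common right divisor of `a` and `h`. -/
def IsGcrd {R : Type*} [Ring R] (a h g : R) : Prop :=
  RDvd g a ∧ RDvd g h ∧ ∀ g' : R, RDvd g' a → RDvd g' h → RDvd g' g

namespace SkewPolyData

variable {D R : Type*} [DivisionRing D] [Ring R] (S : SkewPolyData D R)

/-- The degree of a skew polynomial (`deg 0 = 0` by convention of `sSup ∅`). -/
noncomputable def deg (f : R) : ℕ := sSup {i | S.coeff f i ≠ 0}

def Monic (f : R) : Prop := S.coeff f (S.deg f) = 1

/-- constant term -/
def const (f : R) : D := S.coeff f 0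

/-- `f` is irreducible: it is not a unit and has no proper factorization. -/
def Irred (f : R) : Prop :=
  ¬ IsUnit f ∧ ¬ ∃ g p : R, 1 ≤ S.deg g ∧ S.deg g < S.deg f ∧
      1 ≤ S.deg p ∧ S.deg p < S.deg f ∧ f = g * p

/-- `f` has a proper factorization. -/
def Reducible (f : R) : Prop :=
  ∃ g p : R, 1 ≤ S.deg g ∧ S.deg g < S.deg f ∧
      1 ≤ S.deg p ∧ S.deg p < S.deg f ∧ f = g * p

/-- `gcrd(f,t) = 1`: every common right divisor of `f` and `t` is a (degree-0) unit. -/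
def CoprimeT (f : R) : Prop := ∀ g : R, RDvd g f → RDvd g S.t → S.deg g = 0

/-- `F = C ∩ Fix(σ)` as a subset of `D`. -/
def Fset : Set D := {a | a ∈ Subring.center D ∧ S.σ a = a}

/-- `σ` has order `n` modulo inner automorphisms, with `σ^n = i_u`, `u` fixed by `σ`. -/
def OrderModInner (n : ℕ) (u : D) : Prop :=
  0 < n ∧ u ≠ 0 ∧ S.σ u = u ∧ (∀ z : D, (⇑S.σ)^[n] z = u * z * u⁻¹) ∧
  ∀ j : ℕ, 0 < j → j < n → ¬ ∃ w : D, w ≠ 0 ∧ ∀ z : D, (⇑S.σ)^[j] z = w * z * w⁻¹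

/-- Evaluation of a commutative polynomial with coefficients in (the image of) `F`
at an element `x` of `R`. -/
noncomputable def evalAt {F : Type*} [Field F] (ιF : F →+* D) (p : Polynomial F) (x : R) : R :=
  p.sum fun i a => S.ι (ιF a) * x ^ i

/-- `h` is the minimal central left multiple of `f`, with `h = ĥ(u⁻¹ tⁿ)` for a monic `ĥ ∈ F[x]`. -/
def IsMclm (n : ℕ) (u : D) {F : Type*} [Field F] (ιF : F →+* D)
    (f h : R) (hh : Polynomial F) : Prop :=
  h ∈ Subring.center R ∧ hh.Monic ∧
  h = S.evalAt ιF hh (S.ι u⁻¹ * S.t ^ n) ∧ (∃ g, h = g * f) ∧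
  ∀ (h' : R) (hh' : Polynomial F), hh' ≠ 0 →
    h' = S.evalAt ιF hh' (S.ι u⁻¹ * S.t ^ n) → (∃ g, h' = g * f) → S.deg h ≤ S.deg h'

/-- `h` factors into `k` irreducible elements of `R`. -/
def FactorsIntoIrred (h : R) (k : ℕ) : Prop :=
  ∃ fs : Fin k → R, (∀ i, S.Irred (fs i)) ∧ h = (List.ofFn fs).prod

/-- `modr g f` is the remainder of `g` under right division by `f`. -/
def IsModR (modr : R → R → R) : Prop :=
  ∀ g f : R, 1 ≤ S.deg f →
    (∃ q, g = q * f + modr g f) ∧ (modr g f = 0 ∨ S.deg (modr g f) < S.deg f)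

/-- The set `A = { d₀ + d₁ t + ⋯ + d_{lm-1} t^{lm-1} + ν ρ(d₀) t^{lm} }`. -/
def ASet (ν : D) (ρ : D ≃+* D) (lm : ℕ) : Set R :=
  {x | ∃ b : R, S.deg b < lm ∧ x = b + S.ι (ν * ρ (S.const b)) * S.t ^ lm}

/-- The twisted multiplication `b ∘ c = (b + ν ρ(b₀) t^{lm}) c  mod_r f`. -/
def circ (modr : R → R → R) (f : R) (ν : D) (ρ : D ≃+* D) (lm : ℕ) (b c : R) : R :=
  modr ((b + S.ι (ν * ρ (S.const b)) * S.t ^ lm) * c) f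

/-- All coefficients of `p` lie in the subfield (image of) `E`. -/
def CoeffsIn {E : Type*} [Field E] (ιE : E →+* D) (p : R) : Prop := ∀ i, ∃ e, ιE e = S.coeff p i

end SkewPolyData

/-- `D` has dimension `d2` over its center. -/
def CentralDim (D : Type*) [DivisionRing D] (d2 : ℕ) : Prop :=
  ∃ bas : Fin d2 → D,
    (∀ x : D, ∃ c : Fin d2 → D, (∀ i, c i ∈ Subring.center D) ∧ x = ∑ i, c i * bas i) ∧
    (∀ c : Fin d2 → D, (∀ i, c i ∈ Subring.center D) → ∑ i, c i * bas i = 0 → ∀ i, c i = 0)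

/-- `Fb` is finite-dimensional as a vector space over the subfield `F'` of `D`. -/
def FinDimOver {D : Type*} [DivisionRing D] (F' Fb : Set D) : Prop :=
  ∃ T : Finset D, ↑T ⊆ Fb ∧ ∀ a ∈ Fb, ∃ c : D → D, (∀ x ∈ T, c x ∈ F') ∧ a = ∑ x ∈ T, c x * x

/-- The column rank of a matrix over a division ring: the rank of the right `B`-module
generated by its columns. -/
noncomputable def colrank {k : ℕ} {B : Type*} [DivisionRing B]
    (M : Matrix (Fin k) (Fin k) B) : ℕ :=
  Module.finrank Bᵐᵒᵖ (Submodule.span Bᵐᵒᵖ (Set.range fun j : Fin k => fun i : Fin k => M i j))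

/-- `D` is presented as the cyclic algebra `(E/C, γ, aC)` of degree `d`, with maximal
subfield `E` embedded by `ιE`, `Gal(E/C) = ⟨γ⟩` and a generator `e` with `e^d = aC`. -/
def IsCyclicPresentation {D : Type*} [DivisionRing D] {C E : Type*} [Field C] [Field E]
    [Algebra C E] (ιE : E →+* D) (γ : E ≃ₐ[C] E) (d : ℕ) (e : D) (aC : C) : Prop :=
  (∀ a : D, a ∈ Subring.center D ↔ ∃ c : C, ιE (algebraMap C E c) = a) ∧
  Module.finrank C E = d ∧
  (∀ τ : E ≃ₐ[C] E, τ ∈ Subgroup.zpowers γ) ∧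
  (∀ z : E, e * ιE z = ιE (γ z) * e) ∧
  e ^ d = ιE (algebraMap C E aC) ∧
  (∀ x : D, ∃ c : Fin d → E, x = ∑ i, ιE (c i) * e ^ (i : ℕ))

/-- Multiplication of matrices with entries representing elements of `B = Nuc_r(S_f)`,
where entries multiply via `a ∘ b = ab mod_r f`. -/
def matmulB {R : Type*} [Ring R] (modr : R → R → R) (f : R) {k : ℕ}
    (M N : Fin k → Fin k → R) : Fin k → Fin k → R :=
  fun i j => ∑ l, modr (M i l * N l j) f

end SkewPaper

open SkewPaper

section Aux

namespace SkewAux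

open SkewPaper

variable {D R : Type*} [Field D] [Ring R] (S : SkewPolyData D R)

/-- sum-of-monomials builder -/
noncomputable def L (c : ℕ →₀ D) : R := c.sum fun j a => S.ι a * S.t ^ j

lemma L_eq_sum (c : ℕ →₀ D) : L S c = ∑ j ∈ c.support, S.ι (c j) * S.t ^ j := rfl

lemma coeff_L (c : ℕ →₀ D) (i : ℕ) : S.coeff (L S c) i = c i := by
  rw [L_eq_sum]; exact S.coeff_sum c i

noncomputable def toF (x : R) : ℕ →₀ D :=
  ⟨(S.support_finite x).toFinset, S.coeff x, by
    intro a; simp [Set.Finite.mem_toFinset, Function.mem_support]⟩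

@[simp] lemma toF_apply (x : R) (i : ℕ) : toF S x i = S.coeff x i := rfl

lemma L_toF (x : R) : L S (toF S x) = x :=
  S.coeff_ext _ _ (fun i => by rw [coeff_L]; rfl)

@[simp] lemma coeff_zero (i : ℕ) : S.coeff (0 : R) i = 0 := by
  have h0 : L S 0 = 0 := Finsupp.sum_zero_index
  have := coeff_L S 0 i
  rw [h0] at this; simpa using this

lemma L_add (c d : ℕ →₀ D) : L S (c + d) = L S c + L S d := by
  unfold L
  exact Finsupp.sum_add_index' (fun j => by simp) (fun j a b => by rw [map_add, add_mul])

lemma coeff_add (x y : R) (i : ℕ) : S.coeff (x + y) i = S.coeff x i + S.coeff y i := by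
  conv_lhs => rw [← L_toF S x, ← L_toF S y, ← L_add]
  rw [coeff_L]
  simp

/-- coefficient extraction as an additive hom -/
noncomputable def coeffHom (i : ℕ) : R →+ D :=
  AddMonoidHom.mk' (fun x => S.coeff x i) (fun x y => coeff_add S x y i)

@[simp] lemma coeffHom_apply (i : ℕ) (x : R) : coeffHom S i x = S.coeff x i := rfl

lemma coeff_neg (x : R) (i : ℕ) : S.coeff (-x) i = -S.coeff x i :=
  map_neg (coeffHom S i) x

lemma coeff_sub (x y : R) (i : ℕ) : S.coeff (x - y) i = S.coeff x i - S.coeff y i :=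
  map_sub (coeffHom S i) x y

lemma coeff_finsetsum {α : Type*} (s : Finset α) (g : α → R) (i : ℕ) :
    S.coeff (∑ j ∈ s, g j) i = ∑ j ∈ s, S.coeff (g j) i :=
  map_sum (coeffHom S i) g s

lemma L_single (j : ℕ) (a : D) : L S (Finsupp.single j a) = S.ι a * S.t ^ j :=
  Finsupp.sum_single_index (by simp)

lemma coeff_monomial (a : D) (j i : ℕ) :
    S.coeff (S.ι a * S.t ^ j) i = if j = i then a else 0 := by
  rw [← L_single, coeff_L, Finsupp.single_apply]

lemma coeff_iota (a : D) (i : ℕ) : S.coeff (S.ι a) i = if i = 0 then a else 0 := by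
  have := coeff_monomial S a 0 i
  simp only [pow_zero, mul_one] at this
  rw [this]
  by_cases h : i = 0 <;> simp [h, eq_comm]

lemma coeff_one (i : ℕ) : S.coeff (1 : R) i = if i = 0 then 1 else 0 := by
  rw [← map_one S.ι, coeff_iota]

lemma iota_mul_L (a : D) (c : ℕ →₀ D) :
    S.ι a * L S c = L S (Finsupp.mapRange (a * ·) (mul_zero a) c) := by
  unfold L
  rw [Finsupp.sum_mapRange_index (fun j => by simp)]
  rw [Finsupp.sum, Finsupp.sum, Finset.mul_sum]
  exact Finset.sum_congr rfl (fun j _ => by rw [map_mul, mul_assoc])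

lemma coeff_iota_mul (a : D) (x : R) (i : ℕ) :
    S.coeff (S.ι a * x) i = a * S.coeff x i := by
  conv_lhs => rw [← L_toF S x, iota_mul_L, coeff_L]
  simp

lemma t_mul_L (c : ℕ →₀ D) :
    S.t * L S c
      = L S (Finsupp.mapDomain Nat.succ (Finsupp.mapRange S.σ (map_zero S.σ) c)) := by
  unfold L
  rw [Finsupp.sum_mapDomain_index_inj Nat.succ_injective]
  rw [Finsupp.sum_mapRange_index (fun j => by simp)]
  rw [Finsupp.sum, Finsupp.sum, Finset.mul_sum]
  refine Finset.sum_congr rfl (fun j _ => ?_)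
  rw [← mul_assoc, S.twist, mul_assoc, ← pow_succ']

lemma coeff_t_mul_succ (x : R) (i : ℕ) :
    S.coeff (S.t * x) (i + 1) = S.σ (S.coeff x i) := by
  conv_lhs => rw [← L_toF S x, t_mul_L, coeff_L]
  have : i + 1 = Nat.succ i := rfl
  rw [this, Finsupp.mapDomain_apply Nat.succ_injective, Finsupp.mapRange_apply]
  simp

lemma coeff_t_mul_zero (x : R) : S.coeff (S.t * x) 0 = 0 := by
  conv_lhs => rw [← L_toF S x, t_mul_L, coeff_L]
  rw [Finsupp.mapDomain_notin_range]
  rintro ⟨j, hj⟩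
  exact Nat.succ_ne_zero j hj

lemma sigma_iter_zero (k : ℕ) : (⇑S.σ)^[k] (0 : D) = 0 := by
  induction k with
  | zero => rfl
  | succ k ih => rw [Function.iterate_succ_apply', ih, map_zero]

lemma sigma_iter_ne_zero {a : D} (ha : a ≠ 0) (k : ℕ) : (⇑S.σ)^[k] a ≠ 0 := by
  induction k with
  | zero => exact ha
  | succ k ih =>
    rw [Function.iterate_succ_apply']
    intro h
    exact ih (by simpa using S.σ.injective (h.trans (map_zero S.σ).symm))

lemma coeff_tpow_mul (k : ℕ) (x : R) (i : ℕ) :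
    S.coeff (S.t ^ k * x) (k + i) = (⇑S.σ)^[k] (S.coeff x i) := by
  induction k with
  | zero => simp
  | succ k ih =>
    have h1 : S.t ^ (k + 1) * x = S.t * (S.t ^ k * x) := by rw [pow_succ', mul_assoc]
    have h2 : k + 1 + i = k + i + 1 := by omega
    rw [h1, h2, coeff_t_mul_succ, ih]
    exact (Function.iterate_succ_apply' _ _ _).symm

lemma coeff_tpow_mul_lt (k : ℕ) (x : R) (i : ℕ) (h : i < k) :
    S.coeff (S.t ^ k * x) i = 0 := by
  induction k generalizing i with
  | zero => omega
  | succ k ih =>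
    have h1 : S.t ^ (k + 1) * x = S.t * (S.t ^ k * x) := by rw [pow_succ', mul_assoc]
    rw [h1]
    cases i with
    | zero => exact coeff_t_mul_zero S _
    | succ i => rw [coeff_t_mul_succ, ih i (by omega), map_zero]

lemma coeff_monomial_mul (a : D) (k : ℕ) (x : R) (i : ℕ) :
    S.coeff (S.ι a * S.t ^ k * x) i
      = if k ≤ i then a * (⇑S.σ)^[k] (S.coeff x (i - k)) else 0 := by
  rw [mul_assoc, coeff_iota_mul]
  by_cases h : k ≤ i
  · rw [if_pos h]
    have : i = k + (i - k) := by omega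
    rw [this, coeff_tpow_mul, Nat.add_sub_cancel_left]
  · rw [if_neg h, coeff_tpow_mul_lt S k x i (by omega), mul_zero]

lemma coeff_mul (x y : R) (k : ℕ) :
    S.coeff (x * y) k
      = ∑ i ∈ Finset.range (k + 1), S.coeff x i * (⇑S.σ)^[i] (S.coeff y (k - i)) := by
  set g : ℕ → D := fun j =>
    if j ≤ k then S.coeff x j * (⇑S.σ)^[j] (S.coeff y (k - j)) else 0 with hg
  have lhs_eq : S.coeff (x * y) k = ∑ j ∈ (toF S x).support, g j := by
    conv_lhs => rw [← L_toF S x, L_eq_sum, Finset.sum_mul]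
    rw [coeff_finsetsum]
    exact Finset.sum_congr rfl (fun j _ => by
      rw [coeff_monomial_mul, hg]; simp)
  have rhs_eq : ∑ i ∈ Finset.range (k + 1),
      S.coeff x i * (⇑S.σ)^[i] (S.coeff y (k - i)) = ∑ j ∈ Finset.range (k + 1), g j :=
    Finset.sum_congr rfl (fun j hj => by
      rw [hg]; simp only [if_pos (Nat.lt_succ_iff.mp (Finset.mem_range.mp hj))])
  have hzero_out : ∀ j ∈ (toF S x).support ∪ Finset.range (k + 1),
      j ∉ (toF S x).support → g j = 0 := by
    intro j _ hj
    have : S.coeff x j = 0 := by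
      have := Finsupp.notMem_support_iff.mp hj
      simpa using this
    rw [hg]; simp [this]
  have hzero_out' : ∀ j ∈ (toF S x).support ∪ Finset.range (k + 1),
      j ∉ Finset.range (k + 1) → g j = 0 := by
    intro j _ hj
    have : ¬ j ≤ k := fun h => hj (Finset.mem_range.mpr (by omega))
    rw [hg]; simp [this]
  rw [lhs_eq, rhs_eq,
    Finset.sum_subset Finset.subset_union_left hzero_out,
    ← Finset.sum_subset Finset.subset_union_right hzero_out']

/-! ### Degrees -/

lemma bddAbove_coeffs (x : R) : BddAbove {i | S.coeff x i ≠ 0} :=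
  Set.Finite.bddAbove (S.support_finite x)

lemma ne_zero_iff_coeff {x : R} : x ≠ 0 ↔ ∃ i, S.coeff x i ≠ 0 := by
  constructor
  · intro hx
    by_contra h
    push_neg at h
    exact hx (S.coeff_ext x 0 (fun i => by rw [h i, coeff_zero]))
  · rintro ⟨i, hi⟩ rfl
    exact hi (coeff_zero S i)

lemma coeff_deg_ne_zero {x : R} (hx : x ≠ 0) : S.coeff x (S.deg x) ≠ 0 := by
  obtain ⟨i, hi⟩ := (ne_zero_iff_coeff S).mp hx
  exact Nat.sSup_mem ⟨i, hi⟩ (bddAbove_coeffs S x)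

lemma coeff_eq_zero_of_deg_lt {x : R} {i : ℕ} (h : S.deg x < i) : S.coeff x i = 0 := by
  by_contra hc
  exact absurd (le_csSup (bddAbove_coeffs S x) hc) (not_le.mpr h)

lemma deg_le {x : R} {d : ℕ} (h : ∀ i, d < i → S.coeff x i = 0) : S.deg x ≤ d :=
  csSup_le' (fun i hi => by by_contra hc; exact hi (h i (by omega)))

lemma deg_zero : S.deg (0 : R) = 0 := by
  have : S.deg (0 : R) ≤ 0 := deg_le S (fun i _ => coeff_zero S i)
  omega

lemma ne_zero_of_deg_pos {x : R} (h : 1 ≤ S.deg x) : x ≠ 0 := by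
  rintro rfl; rw [deg_zero] at h; omega

lemma coeff_mul_deg_add (x y : R) :
    S.coeff (x * y) (S.deg x + S.deg y)
      = S.coeff x (S.deg x) * (⇑S.σ)^[S.deg x] (S.coeff y (S.deg y)) := by
  rw [coeff_mul]
  have h3 : S.deg x + S.deg y - S.deg x = S.deg y := by omega
  conv_rhs => rw [← h3]
  apply Finset.sum_eq_single (S.deg x)
  · intro b hb hne
    rcases Nat.lt_or_ge b (S.deg x) with h | h
    · have : S.deg y < S.deg x + S.deg y - b := by omega
      rw [coeff_eq_zero_of_deg_lt S this, sigma_iter_zero S _, mul_zero]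
    · have : S.deg x < b := by omega
      rw [coeff_eq_zero_of_deg_lt S this, zero_mul]
  · intro h
    exact absurd (Finset.mem_range.mpr (by omega)) h

lemma coeff_mul_eq_zero_of_gt {x y : R} {k : ℕ} (h : S.deg x + S.deg y < k) :
    S.coeff (x * y) k = 0 := by
  rw [coeff_mul]
  apply Finset.sum_eq_zero
  intro i _
  rcases Nat.lt_or_ge (S.deg x) i with hi | hi
  · rw [coeff_eq_zero_of_deg_lt S hi, zero_mul]
  · have : S.deg y < k - i := by omega
    rw [coeff_eq_zero_of_deg_lt S this, sigma_iter_zero S _, mul_zero]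

lemma mul_ne_zero_and_deg {x y : R} (hx : x ≠ 0) (hy : y ≠ 0) :
    x * y ≠ 0 ∧ S.deg (x * y) = S.deg x + S.deg y := by
  have hlead : S.coeff (x * y) (S.deg x + S.deg y) ≠ 0 := by
    rw [coeff_mul_deg_add]
    exact mul_ne_zero (coeff_deg_ne_zero S hx)
      (sigma_iter_ne_zero S (coeff_deg_ne_zero S hy) _)
  refine ⟨(ne_zero_iff_coeff S).mpr ⟨_, hlead⟩, le_antisymm ?_ ?_⟩
  · exact deg_le S (fun i hi => coeff_mul_eq_zero_of_gt S hi)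
  · exact le_csSup (bddAbove_coeffs S _) hlead

lemma deg_mul {x y : R} (hx : x ≠ 0) (hy : y ≠ 0) :
    S.deg (x * y) = S.deg x + S.deg y := (mul_ne_zero_and_deg S hx hy).2

include S in
lemma mul_ne_zero'' {x y : R} (hx : x ≠ 0) (hy : y ≠ 0) : x * y ≠ 0 :=
  (mul_ne_zero_and_deg S hx hy).1

include S in
lemma mul_right_cancel' {x y z : R} (hz : z ≠ 0) (h : x * z = y * z) : x = y := by
  by_contra hne
  have hxy : x - y ≠ 0 := sub_ne_zero_of_ne hne
  have : (x - y) * z = 0 := by rw [sub_mul, h, sub_self]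
  exact mul_ne_zero'' S hxy hz this

lemma deg_iota_mul {a : D} (ha : a ≠ 0) (x : R) : S.deg (S.ι a * x) = S.deg x := by
  have hs : {i | S.coeff (S.ι a * x) i ≠ 0} = {i | S.coeff x i ≠ 0} := by
    ext i; simp [coeff_iota_mul, ha]
  show sSup _ = sSup _
  rw [hs]

lemma iota_ne_zero {a : D} (ha : a ≠ 0) : S.ι a ≠ (0 : R) := by
  rw [ne_zero_iff_coeff S]
  exact ⟨0, by rw [coeff_iota]; simpa using ha⟩

lemma eq_iota_const {x : R} (h : S.deg x = 0) : x = S.ι (S.coeff x 0) := by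
  apply S.coeff_ext
  intro i
  rw [coeff_iota]
  cases i with
  | zero => simp
  | succ i => simp [coeff_eq_zero_of_deg_lt S (by omega : S.deg x < i + 1)]

end SkewAux

end Aux

section Aux2

set_option linter.unusedSectionVars false

namespace SkewAux

open SkewPaper

variable {D R : Type*} [Field D] [Ring R] (S : SkewPolyData D R)

/-- "small with respect to f": zero or of degree less than `deg f`. -/
def Sm (f r : R) : Prop := r = 0 ∨ S.deg r < S.deg f

lemma small_coeff {f r : R} (h : Sm S f r) {i : ℕ} (hi : S.deg f ≤ i) :
    S.coeff r i = 0 := by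
  rcases h with rfl | h
  · exact coeff_zero S i
  · exact coeff_eq_zero_of_deg_lt S (by omega)

lemma deg_lt_of_coeff {f r : R} (hr : r ≠ 0)
    (h : ∀ i, S.deg f ≤ i → S.coeff r i = 0) : S.deg r < S.deg f := by
  by_contra hc
  exact coeff_deg_ne_zero S hr (h _ (by omega))

lemma small_of_coeff {f r : R} (h : ∀ i, S.deg f ≤ i → S.coeff r i = 0) : Sm S f r := by
  by_cases hr : r = 0
  · exact Or.inl hr
  · exact Or.inr (deg_lt_of_coeff S hr h)

lemma Sm.add {f r s : R} (hr : Sm S f r) (hs : Sm S f s) : Sm S f (r + s) :=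
  small_of_coeff S (fun i hi => by
    rw [coeff_add, small_coeff S hr hi, small_coeff S hs hi, add_zero])

lemma Sm.iota_mul {f r : R} (a : D) (hr : Sm S f r) : Sm S f (S.ι a * r) :=
  small_of_coeff S (fun i hi => by
    rw [coeff_iota_mul, small_coeff S hr hi, mul_zero])

lemma Sm.zero {f : R} : Sm S f 0 := Or.inl rfl

lemma div_unique {f q₁ r₁ q₂ r₂ : R} (hf : f ≠ 0)
    (h : q₁ * f + r₁ = q₂ * f + r₂) (h₁ : Sm S f r₁) (h₂ : Sm S f r₂) :
    q₁ = q₂ ∧ r₁ = r₂ := by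
  have hq : q₁ = q₂ := by
    by_contra hne
    have hwne : q₁ - q₂ ≠ 0 := sub_ne_zero_of_ne hne
    have hwf : (q₁ - q₂) * f = r₂ - r₁ := by
      rw [sub_mul, sub_eq_sub_iff_add_eq_add, h]
      exact add_comm _ _
    have hd : S.deg ((q₁ - q₂) * f) = S.deg (q₁ - q₂) + S.deg f := deg_mul S hwne hf
    have hcoeff : S.coeff ((q₁ - q₂) * f) (S.deg ((q₁ - q₂) * f)) ≠ 0 :=
      coeff_deg_ne_zero S (mul_ne_zero'' S hwne hf)
    have h0 : S.coeff ((q₁ - q₂) * f) (S.deg (q₁ - q₂) + S.deg f) ≠ 0 := hd ▸ hcoeff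
    apply h0
    rw [hwf, coeff_sub, small_coeff S h₂ (by omega), small_coeff S h₁ (by omega),
      sub_zero]
  refine ⟨hq, ?_⟩
  subst hq
  exact add_left_cancel h

section Modr

variable (modr : R → R → R) (hmodr : S.IsModR modr) {f : R} (hf1 : 1 ≤ S.deg f)

include hmodr hf1

lemma f_ne_zero : f ≠ 0 := ne_zero_of_deg_pos S hf1

lemma modr_small (x : R) : Sm S f (modr x f) := (hmodr x f hf1).2

lemma modr_spec (x : R) : ∃ q, x = q * f + modr x f := (hmodr x f hf1).1

lemma modr_unique {x q r : R} (h : x = q * f + r) (hr : Sm S f r) : modr x f = r := by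
  obtain ⟨q', hq'⟩ := modr_spec S modr hmodr hf1 x
  exact (div_unique S (f_ne_zero S modr hmodr hf1) (hq'.symm.trans h)
    (modr_small S modr hmodr hf1 x) hr).2

lemma modr_self_small {x : R} (hx : Sm S f x) : modr x f = x :=
  modr_unique S modr hmodr hf1 (by rw [zero_mul, zero_add]) hx

lemma modr_zero : modr 0 f = 0 :=
  modr_self_small S modr hmodr hf1 (Sm.zero S)

lemma modr_add (x y : R) : modr (x + y) f = modr x f + modr y f := by
  obtain ⟨qx, hx⟩ := modr_spec S modr hmodr hf1 x
  obtain ⟨qy, hy⟩ := modr_spec S modr hmodr hf1 y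
  refine modr_unique S modr hmodr hf1 (q := qx + qy) ?_
    ((modr_small S modr hmodr hf1 x).add S (modr_small S modr hmodr hf1 y))
  nth_rewrite 1 [hx]
  nth_rewrite 1 [hy]
  rw [add_mul]; abel

lemma modr_iota_mul (a : D) (x : R) : modr (S.ι a * x) f = S.ι a * modr x f := by
  obtain ⟨qx, hx⟩ := modr_spec S modr hmodr hf1 x
  refine modr_unique S modr hmodr hf1 (q := S.ι a * qx) ?_
    ((modr_small S modr hmodr hf1 x).iota_mul S a)
  nth_rewrite 1 [hx]
  rw [mul_add, ← mul_assoc]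

lemma modr_add_mul (x w : R) : modr (x + w * f) f = modr x f := by
  obtain ⟨qx, hx⟩ := modr_spec S modr hmodr hf1 x
  refine modr_unique S modr hmodr hf1 (q := qx + w) ?_ (modr_small S modr hmodr hf1 x)
  nth_rewrite 1 [hx]
  rw [add_mul]; abel

lemma modr_eq_zero_iff {x : R} : modr x f = 0 ↔ ∃ q, x = q * f := by
  constructor
  · intro h
    obtain ⟨q, hq⟩ := modr_spec S modr hmodr hf1 x
    exact ⟨q, by rw [hq, h, add_zero]⟩
  · rintro ⟨q, rfl⟩
    have := modr_add_mul S modr hmodr hf1 0 q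
    rw [zero_add] at this
    rw [this]
    exact modr_zero S modr hmodr hf1

end Modr

end SkewAux

end Aux2

section Aux3

set_option linter.unusedSectionVars false

namespace SkewAux

open SkewPaper

variable {D R : Type*} [Field D] [Ring R] (S : SkewPolyData D R)

/-- build an element from a coefficient vector -/
noncomputable def fromV {m : ℕ} (v : Fin m → D) : R :=
  ∑ i : Fin m, S.ι (v i) * S.t ^ (i : ℕ)

lemma coeff_fromV_lt {m : ℕ} (v : Fin m → D) {k : ℕ} (h : k < m) :
    S.coeff (fromV S v) k = v ⟨k, h⟩ := by
  unfold fromV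
  rw [coeff_finsetsum]
  rw [Finset.sum_eq_single (⟨k, h⟩ : Fin m)]
  · rw [coeff_monomial, if_pos rfl]
  · intro b _ hbne
    rw [coeff_monomial, if_neg (fun hb => hbne (Fin.ext hb))]
  · intro hmem
    exact absurd (Finset.mem_univ _) hmem

lemma coeff_fromV_ge {m : ℕ} (v : Fin m → D) {k : ℕ} (h : m ≤ k) :
    S.coeff (fromV S v) k = 0 := by
  unfold fromV
  rw [coeff_finsetsum]
  apply Finset.sum_eq_zero
  intro i _
  rw [coeff_monomial, if_neg (by omega : ¬ (i : ℕ) = k)]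

lemma fromV_coeff_self {m : ℕ} {x : R} (h : ∀ i, m ≤ i → S.coeff x i = 0) :
    fromV S (fun i : Fin m => S.coeff x (i : ℕ)) = x := by
  apply S.coeff_ext
  intro k
  by_cases hk : k < m
  · rw [coeff_fromV_lt S _ hk]
  · rw [coeff_fromV_ge S _ (by omega), h k (by omega)]

lemma fromV_add {m : ℕ} (v w : Fin m → D) :
    fromV S (v + w) = fromV S v + fromV S w := by
  unfold fromV
  rw [← Finset.sum_add_distrib]
  refine Finset.sum_congr rfl (fun i _ => ?_)
  rw [Pi.add_apply, map_add, add_mul]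

lemma fromV_smul {m : ℕ} (a : D) (v : Fin m → D) :
    fromV S (a • v) = S.ι a * fromV S v := by
  unfold fromV
  rw [Finset.mul_sum]
  refine Finset.sum_congr rfl (fun i _ => ?_)
  rw [Pi.smul_apply, smul_eq_mul, map_mul, mul_assoc]

lemma fromV_eq_zero {m : ℕ} {v : Fin m → D} (h : fromV S v = 0) : v = 0 := by
  funext i
  have := coeff_fromV_lt S v i.isLt
  rw [h, coeff_zero] at this
  exact (congrArg _ (Fin.eta i _)).trans this.symm

end SkewAux

open SkewAux in
/-- determinant over the base field of a triangular `K`-matrix map equals the norm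
of the product of the diagonal. -/
lemma det_restrict_triangular {F' K : Type*} [Field F'] [Field K] [Algebra F' K]
    [FiniteDimensional F' K] {m : ℕ} (Dm : Matrix (Fin m) (Fin m) K)
    (htri : ∀ i j : Fin m, i < j → Dm i j = 0) :
    LinearMap.det ((Matrix.toLin' Dm).restrictScalars F')
      = Algebra.norm F' (∏ i, Dm i i) := by
  classical
  set r := Module.finrank F' K with hr
  set κ : Module.Basis (Fin r) F' K := Module.finBasis F' K with hκ
  set bV : Module.Basis ((_ : Fin m) × Fin r) F' (Fin m → K) := Pi.basis (fun _ => κ) with hbV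
  rw [← LinearMap.det_toMatrix bV]
  set M := LinearMap.toMatrix bV bV ((Matrix.toLin' Dm).restrictScalars F') with hMdef
  have hM : ∀ p q, M p q = Algebra.leftMulMatrix κ (Dm p.1 q.1) p.2 q.2 := by
    intro p q
    rw [hMdef, LinearMap.toMatrix_apply, hbV, Pi.basis_apply]
    rw [LinearMap.coe_restrictScalars, Matrix.toLin'_apply, Matrix.mulVec_single]
    rw [Pi.basis_repr]
    rw [Algebra.leftMulMatrix_eq_repr_mul]
    simp only [Pi.smul_apply, op_smul_eq_mul, Matrix.col_apply]
  have hbt : M.BlockTriangular (fun p => OrderDual.toDual p.1) := by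
    intro p q hlt
    have hpq : p.1 < q.1 := hlt
    rw [hM, htri _ _ hpq, map_zero]
    rfl
  rw [Matrix.BlockTriangular.det_fintype hbt]
  have hblock : ∀ k : Fin m,
      (M.toSquareBlock (fun p => OrderDual.toDual p.1) (OrderDual.toDual k)).det
        = Algebra.norm F' (Dm k k) := by
    intro k
    set e : Fin r ≃ {p : (_ : Fin m) × Fin r // OrderDual.toDual p.1 = OrderDual.toDual k} :=
      { toFun := fun a => ⟨⟨k, a⟩, rfl⟩
        invFun := fun q => q.1.2
        left_inv := fun a => rfl
        right_inv := by
          rintro ⟨⟨j, a⟩, hj⟩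
          have hj' : j = k := OrderDual.toDual.injective hj
          subst hj'
          rfl }
    rw [← Matrix.det_submatrix_equiv_self e, Algebra.norm_eq_matrix_det κ]
    congr 1
    ext a b
    rw [Matrix.submatrix_apply, Matrix.toSquareBlock_def]
    show M ⟨k, a⟩ ⟨k, b⟩ = _
    rw [hM]
  rw [map_prod]
  exact Fintype.prod_equiv OrderDual.ofDual _ _ (fun k => hblock (OrderDual.ofDual k))

section Aux4

set_option linter.unusedSectionVars false

namespace SkewAux

open SkewPaper

variable {D R : Type*} [Field D] [Ring R] (S : SkewPolyData D R)

/-- companion-style matrix of a monic degree-`m` skew polynomial -/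
noncomputable def Dmat (mm : ℕ) (g : R) : Matrix (Fin (mm + 1)) (Fin (mm + 1)) D :=
  fun i j => (if i = j ∧ i ≠ 0 then 1 else 0) - (if j = 0 then S.coeff g (i : ℕ) else 0)

lemma Dmat_tri (mm : ℕ) (g : R) {i j : Fin (mm + 1)} (h : i < j) : Dmat S mm g i j = 0 := by
  unfold Dmat
  have h1 : ¬ (i = j ∧ i ≠ 0) := fun ⟨hij, _⟩ => absurd hij (ne_of_lt h)
  have h2 : ¬ (j = 0) := by
    intro hj
    subst hj
    exact absurd h (by simp [Fin.not_lt, Fin.zero_le])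
  rw [if_neg h1, if_neg h2, sub_zero]

lemma Dmat_diag_prod {mm : ℕ} (g : R) :
    ∏ i, Dmat S mm g i i = -(S.coeff g 0) := by
  unfold Dmat
  rw [Finset.prod_eq_single (0 : Fin (mm + 1))]
  · simp
  · intro i _ hine
    have hi0 : i ≠ 0 := hine
    rw [if_pos ⟨rfl, hi0⟩, if_neg hi0, sub_zero]
  · intro hmem
    exact absurd (Finset.mem_univ _) hmem

lemma Dmat_mulVec {mm : ℕ} (g : R) (w : Fin (mm + 1) → D) (i : Fin (mm + 1)) :
    (Dmat S mm g).mulVec w i = (if i ≠ 0 then w i else 0) - S.coeff g (i : ℕ) * w 0 := by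
  unfold Dmat Matrix.mulVec dotProduct
  simp only [sub_mul]
  rw [Finset.sum_sub_distrib]
  congr 1
  · by_cases hi : i = 0
    · subst hi
      simp
    · rw [if_pos hi]
      rw [Finset.sum_eq_single i]
      · rw [if_pos ⟨rfl, hi⟩, one_mul]
      · intro j _ hj
        rw [if_neg (fun hc => hj hc.1.symm), zero_mul]
      · intro hmem
        exact absurd (Finset.mem_univ _) hmem
  · rw [Finset.sum_eq_single (0 : Fin (mm + 1))]
    · rw [if_pos rfl]
    · intro j _ hj
      rw [if_neg hj, zero_mul]
    · intro hmem
      exact absurd (Finset.mem_univ _) hmem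

lemma crux {mm : ℕ} {g : R} (hgdeg : S.deg g = mm + 1)
    (hglead : S.coeff g (mm + 1) = 1) (v : Fin (mm + 1) → D) :
    S.t * fromV S (fun i => v (finRotate (mm + 1) i))
      = S.ι (S.σ (v 0)) * g
        + fromV S ((Dmat S mm g).mulVec (fun i => S.σ (v i))) := by
  apply S.coeff_ext
  intro k
  rw [coeff_add, coeff_iota_mul]
  cases k with
  | zero =>
    rw [coeff_t_mul_zero, coeff_fromV_lt S _ (by omega : 0 < mm + 1)]
    rw [Dmat_mulVec]
    have h00 : (⟨0, by omega⟩ : Fin (mm + 1)) = 0 := rfl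
    rw [h00, if_neg (by simp), zero_sub, Fin.val_zero]
    ring
  | succ k' =>
    rw [coeff_t_mul_succ]
    by_cases hk : k' + 1 < mm + 1
    · -- middle coefficients
      have hk' : k' < mm + 1 := by omega
      rw [coeff_fromV_lt S _ hk', coeff_fromV_lt S _ hk]
      rw [Dmat_mulVec]
      have hNlast : (⟨k', hk'⟩ : Fin (mm + 1)) ≠ Fin.last mm := by
        intro hc
        have := congrArg Fin.val hc
        simp only [Fin.last] at this
        omega
      have hrot : finRotate (mm + 1) ⟨k', hk'⟩ = ⟨k' + 1, hk⟩ := by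
        apply Fin.ext
        rw [coe_finRotate_of_ne_last hNlast]
      rw [hrot]
      have hne0 : (⟨k' + 1, hk⟩ : Fin (mm + 1)) ≠ 0 := by
        intro hc
        have := congrArg Fin.val hc
        simp at this
      rw [if_pos hne0]
      ring
    · by_cases hkm : k' + 1 = mm + 1
      · -- top coefficient k = m
        have hk'last : (⟨k', by omega⟩ : Fin (mm + 1)) = Fin.last mm := by
          apply Fin.ext; simp [Fin.last]; omega
        rw [coeff_fromV_lt S _ (by omega : k' < mm + 1),
          coeff_fromV_ge S _ (by omega : mm + 1 ≤ k' + 1)]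
        rw [hk'last, finRotate_last, hkm, hglead, mul_one, add_zero]
      · -- beyond degree
        have hge : mm + 1 ≤ k' := by omega
        rw [coeff_fromV_ge S _ hge, coeff_fromV_ge S _ (by omega), map_zero]
        rw [coeff_eq_zero_of_deg_lt S (by omega : S.deg g < k' + 1), mul_zero, add_zero]

end SkewAux

end Aux4

section Aux5

set_option linter.unusedSectionVars false
set_option maxHeartbeats 1000000

namespace SkewAux

open SkewPaper

variable {D R : Type*} [Field D] [Ring R] (S : SkewPolyData D R)

/-- right multiplication by `c` followed by reduction mod `f`, on coefficient vectors -/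
noncomputable def PsiL (modr : R → R → R) (hmodr : S.IsModR modr) {f : R}
    (hf1 : 1 ≤ S.deg f) (c : R) (m : ℕ) : (Fin m → D) →ₗ[D] (Fin m → D) where
  toFun := fun x i => S.coeff (modr (fromV S x * c) f) (i : ℕ)
  map_add' := by
    intro x y
    funext i
    simp only [Pi.add_apply]
    rw [fromV_add, add_mul, modr_add S modr hmodr hf1, coeff_add]
  map_smul' := by
    intro a x
    funext i
    simp only [Pi.smul_apply, RingHom.id_apply, smul_eq_mul]
    rw [fromV_smul, mul_assoc, modr_iota_mul S modr hmodr hf1, coeff_iota_mul]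

@[simp] lemma PsiL_apply (modr : R → R → R) (hmodr : S.IsModR modr) {f : R}
    (hf1 : 1 ≤ S.deg f) (c : R) (m : ℕ) (x : Fin m → D) (i : Fin m) :
    PsiL S modr hmodr hf1 c m x i = S.coeff (modr (fromV S x * c) f) (i : ℕ) := rfl

/-- coordinatewise `σ`, as an `F'`-linear map -/
noncomputable def SsigL (F' : Type*) [Field F'] [Algebra F' D]
    (σfix : ∀ e : F', S.σ (algebraMap F' D e) = algebraMap F' D e) (m : ℕ) :
    (Fin m → D) →ₗ[F'] (Fin m → D) where
  toFun := fun x i => S.σ (x i)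
  map_add' := fun x y => funext fun i => by simp
  map_smul' := fun e x => funext fun i => by
    simp only [Pi.smul_apply, RingHom.id_apply]
    rw [Algebra.smul_def, Algebra.smul_def, map_mul, σfix]

@[simp] lemma SsigL_apply (F' : Type*) [Field F'] [Algebra F' D]
    (σfix : ∀ e : F', S.σ (algebraMap F' D e) = algebraMap F' D e) (m : ℕ)
    (x : Fin m → D) (i : Fin m) : SsigL S F' σfix m x i = S.σ (x i) := rfl

end SkewAux

open SkewAux in
theorem skew_key {F' K Rg : Type*} [Field F'] [Field K] [Ring Rg]
    [Algebra F' K] [FiniteDimensional F' K]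
    (S : SkewPolyData K Rg)
    (σfix : ∀ e : F', S.σ (algebraMap F' K e) = algebraMap F' K e)
    (modr : Rg → Rg → Rg) (hmodr : S.IsModR modr)
    (f : Rg) (mm : ℕ) (hdegf : S.deg f = mm + 1) (hflead : S.coeff f (mm + 1) = 1)
    (hirr : S.Irred f)
    (ν : K) (ρ : K ≃+* K) (ρfix : ∀ e : F', ρ (algebraMap F' K e) = algebraMap F' K e)
    (hnorm : Algebra.norm F' (S.coeff f 0) * Algebra.norm F' ν ≠ 1)
    (b c : Rg) (hb : S.deg b < mm + 1) (hc : S.deg c < mm + 1)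
    (hbne : b ≠ 0) (hcne : c ≠ 0)
    (hzero : modr ((b + S.ι (ν * ρ (S.coeff b 0)) * S.t ^ (mm + 1)) * c) f = 0) :
    False := by
  classical
  have hf1 : 1 ≤ S.deg f := by omega
  have hfne : f ≠ 0 := ne_zero_of_deg_pos S hf1
  set α := ν * ρ (S.coeff b 0) with hα
  set b' := b + S.ι α * S.t ^ (mm + 1) with hb'def
  -- coefficients of b'
  have hbcm : ∀ i, mm + 1 ≤ i → S.coeff b i = 0 :=
    fun i hi => coeff_eq_zero_of_deg_lt S (by omega)
  have hb'c : ∀ i, S.coeff b' i = S.coeff b i + (if mm + 1 = i then α else 0) := by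
    intro i; rw [hb'def, coeff_add, coeff_monomial]
  have hb'top : S.coeff b' (mm + 1) = α := by
    rw [hb'c, hbcm _ le_rfl, if_pos rfl, zero_add]
  have hb'0 : S.coeff b' 0 = S.coeff b 0 := by
    rw [hb'c, if_neg (by omega), add_zero]
  have hb'hi : ∀ i, mm + 1 < i → S.coeff b' i = 0 := by
    intro i hi; rw [hb'c, hbcm _ (by omega), if_neg (by omega), add_zero]
  have hb'le : S.deg b' ≤ mm + 1 := deg_le S (fun i hi => hb'hi i hi)
  have hb'ne : b' ≠ 0 := by
    by_cases ha : α = 0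
    · refine (ne_zero_iff_coeff S).mpr ⟨S.deg b, ?_⟩
      rw [hb'c, ha]
      simp only [ite_self, add_zero]
      exact coeff_deg_ne_zero S hbne
    · exact (ne_zero_iff_coeff S).mpr ⟨mm + 1, by rw [hb'top]; exact ha⟩
  -- the left ideal `{x | xc ∈ Rf}`
  have hKcb' : ∃ s, b' * c = s * f := (modr_eq_zero_iff S modr hmodr hf1).mp hzero
  set Kc : Rg → Prop := fun x => ∃ s, x * c = s * f with hKcdef
  have hKc_mul : ∀ (r x : Rg), Kc x → Kc (r * x) := by
    rintro r x ⟨s, hs⟩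
    exact ⟨r * s, by rw [mul_assoc, hs, ← mul_assoc]⟩
  have hKc_sub : ∀ x y, Kc x → Kc y → Kc (x - y) := by
    rintro x y ⟨s, hs⟩ ⟨u, hu⟩
    exact ⟨s - u, by rw [sub_mul, hs, hu, sub_mul]⟩
  -- minimal-degree nonzero element
  have hex : ∃ N : ℕ, ∃ x, Kc x ∧ x ≠ 0 ∧ S.deg x = N := ⟨S.deg b', b', hKcb', hb'ne, rfl⟩
  obtain ⟨d2, hd2K, hd2ne, hd2deg⟩ := Nat.find_spec hex
  have hmin : ∀ x, Kc x → x ≠ 0 → Nat.find hex ≤ S.deg x :=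
    fun x h1 h2 => Nat.find_min' hex ⟨x, h1, h2, rfl⟩
  have hlc : S.coeff d2 (S.deg d2) ≠ 0 := coeff_deg_ne_zero S hd2ne
  set d1 := S.ι (S.coeff d2 (S.deg d2))⁻¹ * d2 with hd1def
  have hd1ne : d1 ≠ 0 := mul_ne_zero'' S (iota_ne_zero S (inv_ne_zero hlc)) hd2ne
  have hd1deg : S.deg d1 = S.deg d2 := deg_iota_mul S (inv_ne_zero hlc) d2
  have hd1monic : S.coeff d1 (S.deg d1) = 1 := by
    rw [hd1deg, hd1def, coeff_iota_mul, inv_mul_cancel₀ hlc]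
  have hd1K : Kc d1 := hKc_mul _ _ hd2K
  -- deg d1 ≥ 1
  have hd1pos : 1 ≤ S.deg d1 := by
    by_contra hdc
    have hd10 : S.deg d1 = 0 := by omega
    have hδ : S.coeff d1 0 ≠ 0 := by
      have := coeff_deg_ne_zero S hd1ne; rwa [hd10] at this
    obtain ⟨s, hs⟩ := hd1K
    have hs' : S.ι (S.coeff d1 0) * c = s * f := by
      rw [← eq_iota_const S hd10]; exact hs
    have hcf : c = (S.ι (S.coeff d1 0)⁻¹ * s) * f := by
      rw [mul_assoc, ← hs', ← mul_assoc, ← map_mul, inv_mul_cancel₀ hδ, map_one, one_mul]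
    have hsne : (S.ι (S.coeff d1 0)⁻¹ * s) ≠ 0 := by
      intro h0; rw [h0, zero_mul] at hcf; exact hcne hcf
    have hdm := deg_mul S hsne hfne
    rw [← hcf] at hdm
    rw [hdegf] at hdm
    omega
  -- Kc = R·d1
  have hKc_dvd : ∀ x, Kc x → ∃ w, x = w * d1 := by
    intro x hx
    obtain ⟨qx, hqx⟩ := modr_spec S modr hmodr hd1pos x
    by_cases hrr : modr x d1 = 0
    · exact ⟨qx, by rw [hqx, hrr, add_zero]⟩
    · exfalso
      have h3 : modr x d1 = x - qx * d1 := by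
        nth_rewrite 2 [hqx]
        rw [add_sub_cancel_left]
      have hKrr : Kc (modr x d1) := by
        rw [h3]; exact hKc_sub _ _ hx (hKc_mul _ _ hd1K)
      have h4 := hmin _ hKrr hrr
      have h5 := modr_small S modr hmodr hd1pos x
      rcases h5 with h5 | h5
      · exact hrr h5
      · rw [hd1deg, hd2deg] at h5
        omega
  obtain ⟨e1, he1⟩ := hd1K
  -- b' = w * d1
  obtain ⟨w, hw⟩ := hKc_dvd b' hKcb'
  have hwne : w ≠ 0 := by intro h0; rw [h0, zero_mul] at hw; exact hb'ne hw
  have hdegsum : S.deg b' = S.deg w + S.deg d1 := by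
    rw [hw]; exact deg_mul S hwne hd1ne
  have hd1le : S.deg d1 ≤ mm + 1 := by omega
  -- Bezout
  have hBez : ∃ u v : Rg, u * c + v * f = 1 := by
    set Jp : Rg → Prop := fun x => ∃ u v, x = u * c + v * f with hJpdef
    have hJc : Jp c := ⟨1, 0, by rw [one_mul, zero_mul, add_zero]⟩
    have hJf : Jp f := ⟨0, 1, by rw [one_mul, zero_mul, zero_add]⟩
    have hJmul : ∀ r x, Jp x → Jp (r * x) := by
      rintro r x ⟨u, v, rfl⟩
      exact ⟨r * u, r * v, by rw [mul_add, ← mul_assoc, ← mul_assoc]⟩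
    have hJsub : ∀ x y, Jp x → Jp y → Jp (x - y) := by
      rintro x y ⟨u1, v1, rfl⟩ ⟨u2, v2, rfl⟩
      exact ⟨u1 - u2, v1 - v2, by rw [sub_mul, sub_mul]; abel⟩
    have hexJ : ∃ N : ℕ, ∃ x, Jp x ∧ x ≠ 0 ∧ S.deg x = N := ⟨S.deg c, c, hJc, hcne, rfl⟩
    obtain ⟨g1, hg1J, hg1ne, hg1deg⟩ := Nat.find_spec hexJ
    have hminJ : ∀ x, Jp x → x ≠ 0 → Nat.find hexJ ≤ S.deg x :=
      fun x h1 h2 => Nat.find_min' hexJ ⟨x, h1, h2, rfl⟩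
    by_cases hdg : S.deg g1 = 0
    · have hγ : S.coeff g1 0 ≠ 0 := by
        have := coeff_deg_ne_zero S hg1ne; rwa [hdg] at this
      obtain ⟨u, v, huv⟩ := hg1J
      refine ⟨S.ι (S.coeff g1 0)⁻¹ * u, S.ι (S.coeff g1 0)⁻¹ * v, ?_⟩
      have h6 : S.ι (S.coeff g1 0)⁻¹ * g1 = 1 := by
        nth_rewrite 2 [eq_iota_const S hdg]
        rw [← map_mul, inv_mul_cancel₀ hγ, map_one]
      calc S.ι (S.coeff g1 0)⁻¹ * u * c + S.ι (S.coeff g1 0)⁻¹ * v * f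
          = S.ι (S.coeff g1 0)⁻¹ * (u * c + v * f) := by
            rw [mul_add, mul_assoc, mul_assoc]
        _ = S.ι (S.coeff g1 0)⁻¹ * g1 := by rw [← huv]
        _ = 1 := h6
    · exfalso
      have hg1pos : 1 ≤ S.deg g1 := by omega
      have hdvd : ∀ x, Jp x → ∃ w', x = w' * g1 := by
        intro x hx
        obtain ⟨qx, hqx⟩ := modr_spec S modr hmodr hg1pos x
        by_cases hrr : modr x g1 = 0
        · exact ⟨qx, by rw [hqx, hrr, add_zero]⟩
        · exfalso
          have h3 : modr x g1 = x - qx * g1 := by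
            nth_rewrite 2 [hqx]
            rw [add_sub_cancel_left]
          have hJrr : Jp (modr x g1) := by
            rw [h3]; exact hJsub _ _ hx (hJmul _ _ hg1J)
          have h4 := hminJ _ hJrr hrr
          have h5 := modr_small S modr hmodr hg1pos x
          rcases h5 with h5 | h5
          · exact hrr h5
          · omega
      obtain ⟨qf, hqf⟩ := hdvd f hJf
      obtain ⟨qc, hqc⟩ := hdvd c hJc
      have hqfne : qf ≠ 0 := fun h0 => hfne (by rw [hqf, h0, zero_mul])
      have hqcne : qc ≠ 0 := fun h0 => hcne (by rw [hqc, h0, zero_mul])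
      have hdf := deg_mul S hqfne hg1ne
      rw [← hqf] at hdf
      have hdc' := deg_mul S hqcne hg1ne
      rw [← hqc] at hdc'
      exact hirr.2 ⟨qf, g1, by omega, by omega, by omega, by omega, hqf⟩
  -- deg d1 = mm + 1
  have hd1m : S.deg d1 = mm + 1 := by
    rcases Nat.lt_or_ge (S.deg d1) (mm + 1) with hlt | hge
    · exfalso
      obtain ⟨u, v, huv⟩ := hBez
      set rvec : Fin (mm + 1) → Rg := fun i => modr (S.t ^ (i : ℕ) * u) d1 with hrvecdef
      set wv : Fin (mm + 1) → (Fin (S.deg d1) → K) :=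
        fun i k => S.coeff (rvec i) (k : ℕ) with hwvdef
      have hnli : ¬ LinearIndependent K wv := by
        intro hli
        have hcard := hli.fintype_card_le_finrank
        rw [Fintype.card_fin, Module.finrank_fin_fun] at hcard
        omega
      obtain ⟨s0, hsum, j0, hj0⟩ := Fintype.not_linearIndependent_iff.mp hnli
      have hrsmall : ∀ (i : Fin (mm + 1)) (k : ℕ), S.deg d1 ≤ k → S.coeff (rvec i) k = 0 :=
        fun i k hk => small_coeff S (modr_small S modr hmodr hd1pos _) hk
      have hrsum : ∑ i, S.ι (s0 i) * rvec i = 0 := by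
        apply S.coeff_ext
        intro k
        rw [coeff_finsetsum, coeff_zero]
        by_cases hk : k < S.deg d1
        · have hsum' := congrFun hsum ⟨k, hk⟩
          simp only [Finset.sum_apply, Pi.smul_apply, smul_eq_mul, Pi.zero_apply] at hsum'
          rw [← hsum']
          exact Finset.sum_congr rfl (fun i _ => by rw [coeff_iota_mul])
        · exact Finset.sum_eq_zero
            (fun i _ => by rw [coeff_iota_mul, hrsmall i k (by omega), mul_zero])
      have hsi : ∀ i : Fin (mm + 1), ∃ si, S.t ^ (i : ℕ) * u = si * d1 + rvec i :=
        fun i => modr_spec S modr hmodr hd1pos _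
      choose sfun hsfun using hsi
      have hterm : ∀ i : Fin (mm + 1), S.ι (s0 i) * S.t ^ (i : ℕ)
          = (S.ι (s0 i) * (sfun i * e1 + S.t ^ (i : ℕ) * v)) * f
            + (S.ι (s0 i) * rvec i) * c := by
        intro i
        calc S.ι (s0 i) * S.t ^ (i : ℕ)
            = S.ι (s0 i) * (S.t ^ (i : ℕ) * (u * c + v * f)) := by rw [huv, mul_one]
          _ = S.ι (s0 i) * ((S.t ^ (i : ℕ) * u) * c + (S.t ^ (i : ℕ) * v) * f) := by
              noncomm_ring
          _ = S.ι (s0 i) * ((sfun i * d1 + rvec i) * c + (S.t ^ (i : ℕ) * v) * f) := by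
              rw [hsfun i]
          _ = S.ι (s0 i) * (sfun i * (d1 * c) + rvec i * c + (S.t ^ (i : ℕ) * v) * f) := by
              noncomm_ring
          _ = S.ι (s0 i) * (sfun i * (e1 * f) + rvec i * c + (S.t ^ (i : ℕ) * v) * f) := by
              rw [he1]
          _ = (S.ι (s0 i) * (sfun i * e1 + S.t ^ (i : ℕ) * v)) * f
              + (S.ι (s0 i) * rvec i) * c := by noncomm_ring
      have hz : fromV S s0 = (∑ i, S.ι (s0 i) * (sfun i * e1 + S.t ^ (i : ℕ) * v)) * f := by
        show ∑ i : Fin (mm + 1), S.ι (s0 i) * S.t ^ (i : ℕ) = _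
        calc ∑ i : Fin (mm + 1), S.ι (s0 i) * S.t ^ (i : ℕ)
            = ∑ i : Fin (mm + 1), ((S.ι (s0 i) * (sfun i * e1 + S.t ^ (i : ℕ) * v)) * f
                + (S.ι (s0 i) * rvec i) * c) := Finset.sum_congr rfl (fun i _ => hterm i)
          _ = (∑ i, S.ι (s0 i) * (sfun i * e1 + S.t ^ (i : ℕ) * v)) * f
                + (∑ i, S.ι (s0 i) * rvec i) * c := by
              rw [Finset.sum_add_distrib, Finset.sum_mul, Finset.sum_mul]
          _ = _ := by rw [hrsum, zero_mul, add_zero]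
      have hzne : fromV S s0 ≠ 0 := by
        intro h0
        have h1 := fromV_eq_zero S h0
        rw [h1] at hj0
        exact hj0 rfl
      have hQne : (∑ i, S.ι (s0 i) * (sfun i * e1 + S.t ^ (i : ℕ) * v)) ≠ 0 :=
        fun h0 => hzne (by rw [hz, h0, zero_mul])
      have hdegz := deg_mul S hQne hfne
      rw [← hz] at hdegz
      have hdegz_lt : S.deg (fromV S s0) ≤ mm :=
        deg_le S (fun k hk => coeff_fromV_ge S s0 (by omega))
      rw [hdegf] at hdegz
      omega
    · omega
  -- leading/constant coefficients of w and d1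
  have hwdeg : S.deg w = 0 := by omega
  have hωne : S.coeff w 0 ≠ 0 := by
    have := coeff_deg_ne_zero S hwne; rwa [hwdeg] at this
  rw [eq_iota_const S hwdeg] at hw
  have hd1lead : S.coeff d1 (mm + 1) = 1 := by rw [← hd1m]; exact hd1monic
  have hαω : α = S.coeff w 0 := by
    rw [← hb'top, hw, coeff_iota_mul, hd1lead, mul_one]
  have hb0δ : S.coeff b 0 = S.coeff w 0 * S.coeff d1 0 := by
    rw [← hb'0, hw, coeff_iota_mul]
  have hb0ne : S.coeff b 0 ≠ 0 := by
    intro h0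
    apply hωne
    rw [← hαω, hα, h0, map_zero, mul_zero]
  have hδ0ne : S.coeff d1 0 ≠ 0 :=
    fun h0 => hb0ne (by rw [hb0δ, h0, mul_zero])
  -- linear-algebra stage
  set ΨK := PsiL S modr hmodr hf1 c (mm + 1) with hΨKdef
  have hΨ0 : ∀ x, ΨK x = 0 → x = 0 := by
    intro x hx
    have hmz : modr (fromV S x * c) f = 0 := by
      apply S.coeff_ext
      intro k
      rw [coeff_zero]
      by_cases hk : k < mm + 1
      · have := congrFun hx ⟨k, hk⟩
        exact this
      · exact small_coeff S (modr_small S modr hmodr hf1 _) (by omega)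
    have hxK : Kc (fromV S x) := (modr_eq_zero_iff S modr hmodr hf1).mp hmz
    obtain ⟨wx, hwx⟩ := hKc_dvd _ hxK
    by_cases hwx0 : wx = 0
    · rw [hwx0, zero_mul] at hwx
      exact fromV_eq_zero S hwx
    · exfalso
      have h8 := deg_mul S hwx0 hd1ne
      rw [← hwx] at h8
      have h9 : S.deg (fromV S x) ≤ mm := deg_le S (fun k hk => coeff_fromV_ge S x (by omega))
      omega
  have hΨinj : Function.Injective ΨK := by
    intro x y hxy
    have := hΨ0 (x - y) (by rw [map_sub, hxy, sub_self])
    exact sub_eq_zero.mp this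
  have hΨsurj : Function.Surjective ΨK := LinearMap.injective_iff_surjective.mp hΨinj
  set ΨE : (Fin (mm + 1) → K) ≃ₗ[K] (Fin (mm + 1) → K) :=
    LinearEquiv.ofBijective ΨK ⟨hΨinj, hΨsurj⟩ with hΨEdef
  -- the semilinear "shift" model
  have hmodel : ∀ (g : Rg) (hg1 : 1 ≤ S.deg g) (hgdeg : S.deg g = mm + 1)
      (hglead : S.coeff g (mm + 1) = 1) (x : Fin (mm + 1) → K),
      (fun i : Fin (mm + 1) => S.coeff (modr (S.t * fromV S x) g) (i : ℕ))
        = (Dmat S mm g).mulVec (fun i => S.σ (x ((finRotate (mm + 1)).symm i))) := by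
    intro g hg1 hgdeg hglead x
    have hc2 := crux S hgdeg hglead (fun j => x ((finRotate (mm + 1)).symm j))
    simp only [Equiv.symm_apply_apply] at hc2
    have hsmall : Sm S g (fromV S ((Dmat S mm g).mulVec
        (fun i => S.σ (x ((finRotate (mm + 1)).symm i))))) :=
      small_of_coeff S (fun i hi => coeff_fromV_ge S _ (by omega))
    have hmr := modr_unique S modr hmodr hg1 hc2 hsmall
    funext i
    rw [hmr, coeff_fromV_lt S _ i.isLt]
  -- conjugation identity
  have hconj : ∀ x : Fin (mm + 1) → K,
      ΨK (fun i : Fin (mm + 1) => S.coeff (modr (S.t * fromV S x) d1) (i : ℕ))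
        = fun i : Fin (mm + 1) => S.coeff (modr (S.t * fromV S (ΨK x)) f) (i : ℕ) := by
    intro x
    have hA : fromV S (fun i : Fin (mm + 1) => S.coeff (modr (S.t * fromV S x) d1) (i : ℕ))
        = modr (S.t * fromV S x) d1 :=
      fromV_coeff_self S (fun i hi =>
        small_coeff S (modr_small S modr hmodr hd1pos _) (by omega))
    obtain ⟨qd, hqd⟩ := modr_spec S modr hmodr hd1pos (S.t * fromV S x)
    have hqd' : modr (S.t * fromV S x) d1 = S.t * fromV S x - qd * d1 := by
      nth_rewrite 2 [hqd]
      rw [add_sub_cancel_left]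
    have hL : modr (modr (S.t * fromV S x) d1 * c) f = modr (S.t * (fromV S x * c)) f := by
      have hsub : modr (S.t * fromV S x) d1 * c
          = S.t * (fromV S x * c) + (-(qd * e1)) * f := by
        calc modr (S.t * fromV S x) d1 * c
            = (S.t * fromV S x - qd * d1) * c := by rw [hqd']
          _ = S.t * (fromV S x * c) - qd * (d1 * c) := by noncomm_ring
          _ = S.t * (fromV S x * c) - qd * (e1 * f) := by rw [he1]
          _ = S.t * (fromV S x * c) + (-(qd * e1)) * f := by noncomm_ring
      rw [hsub, modr_add_mul S modr hmodr hf1]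
    have hB : fromV S (ΨK x) = modr (fromV S x * c) f :=
      fromV_coeff_self S (fun i hi =>
        small_coeff S (modr_small S modr hmodr hf1 _) (by omega))
    obtain ⟨qf2, hqf2⟩ := modr_spec S modr hmodr hf1 (fromV S x * c)
    have hqf2' : modr (fromV S x * c) f = fromV S x * c - qf2 * f := by
      nth_rewrite 2 [hqf2]
      rw [add_sub_cancel_left]
    have hR : modr (S.t * fromV S (ΨK x)) f = modr (S.t * (fromV S x * c)) f := by
      have hsub2 : S.t * fromV S (ΨK x)
          = S.t * (fromV S x * c) + (-(S.t * qf2)) * f := by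
        rw [hB, hqf2']
        noncomm_ring
      rw [hsub2, modr_add_mul S modr hmodr hf1]
    funext i
    show S.coeff (modr (fromV S (fun i : Fin (mm + 1)
        => S.coeff (modr (S.t * fromV S x) d1) (i : ℕ)) * c) f) (i : ℕ) = _
    rw [hA, hL, hR]
  -- linear maps over F'
  set Sσ := SsigL S F' σfix (mm + 1) with hSσdef
  set rotinv : (Fin (mm + 1) → K) →ₗ[K] (Fin (mm + 1) → K) :=
    LinearMap.funLeft K K ((finRotate (mm + 1)).symm) with hrotinvdef
  set E := Sσ ∘ₗ (rotinv.restrictScalars F') with hEdef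
  set Af := ((Matrix.toLin' (Dmat S mm f)).restrictScalars F') with hAfdef
  set Ad := ((Matrix.toLin' (Dmat S mm d1)).restrictScalars F') with hAddef
  set P := (ΨE.restrictScalars F').toLinearMap with hPdef
  have hEapp : ∀ x : Fin (mm + 1) → K,
      E x = fun i => S.σ (x ((finRotate (mm + 1)).symm i)) := fun x => rfl
  have hPapp : ∀ x : Fin (mm + 1) → K, P x = ΨK x := fun x => rfl
  have hlin : P ∘ₗ (Ad ∘ₗ E) = (Af ∘ₗ E) ∘ₗ P := by
    apply LinearMap.ext
    intro x
    have h1 : (Ad ∘ₗ E) x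
        = fun i : Fin (mm + 1) => S.coeff (modr (S.t * fromV S x) d1) (i : ℕ) := by
      show Ad (E x) = _
      rw [hEapp]
      rw [hmodel d1 hd1pos hd1m hd1lead x]
      rfl
    have h2 : (Af ∘ₗ E) (P x)
        = fun i : Fin (mm + 1) => S.coeff (modr (S.t * fromV S (ΨK x)) f) (i : ℕ) := by
      show Af (E (P x)) = _
      rw [hPapp, hEapp]
      rw [hmodel f hf1 hdegf hflead (ΨK x)]
      rfl
    show P ((Ad ∘ₗ E) x) = (Af ∘ₗ E) (P x)
    rw [h1, h2, hPapp]
    exact hconj x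
  -- determinants
  have hdetP : IsUnit (LinearMap.det P) := LinearEquiv.isUnit_det' (ΨE.restrictScalars F')
  have hEbij : Function.Bijective E := by
    constructor
    · intro x y hxy
      funext j
      have := congrFun hxy (finRotate (mm + 1) j)
      rw [hEapp, hEapp] at this
      simp only [Equiv.symm_apply_apply] at this
      exact S.σ.injective this
    · intro y
      refine ⟨fun j => S.σ.symm (y (finRotate (mm + 1) j)), ?_⟩
      rw [hEapp]
      funext i
      simp
  have hdetE : IsUnit (LinearMap.det E) := by
    have h11 := LinearEquiv.isUnit_det' (LinearEquiv.ofBijective E hEbij)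
    have h12 : (LinearEquiv.ofBijective E hEbij).toLinearMap = E :=
      LinearMap.ext (fun x => rfl)
    rwa [h12] at h11
  have hdetf : LinearMap.det Af = Algebra.norm F' (-(S.coeff f 0)) := by
    rw [hAfdef, det_restrict_triangular (Dmat S mm f) (fun i j hij => Dmat_tri S mm f hij),
      Dmat_diag_prod]
  have hdetd : LinearMap.det Ad = Algebra.norm F' (-(S.coeff d1 0)) := by
    rw [hAddef, det_restrict_triangular (Dmat S mm d1) (fun i j hij => Dmat_tri S mm d1 hij),
      Dmat_diag_prod]
  clear_value E Af Ad P
  have hdet := congrArg LinearMap.det hlin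
  rw [LinearMap.det_comp, LinearMap.det_comp, LinearMap.det_comp, LinearMap.det_comp] at hdet
  have hdAdAf : LinearMap.det Ad = LinearMap.det Af := by
    have h10 : LinearMap.det Ad * (LinearMap.det E * LinearMap.det P)
        = LinearMap.det Af * (LinearMap.det E * LinearMap.det P) := by
      linear_combination hdet
    exact mul_right_cancel₀ (by
      exact mul_ne_zero hdetE.ne_zero hdetP.ne_zero) h10
  have hNδa : Algebra.norm F' (S.coeff d1 0) = Algebra.norm F' (S.coeff f 0) := by
    have h11 : Algebra.norm F' (-(S.coeff d1 0)) = Algebra.norm F' (-(S.coeff f 0)) := by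
      rw [← hdetd, hdAdAf, hdetf]
    rw [← neg_one_mul (S.coeff d1 0), ← neg_one_mul (S.coeff f 0), map_mul, map_mul] at h11
    have hne1 : Algebra.norm F' (-1 : K) ≠ 0 :=
      Algebra.norm_ne_zero_iff.mpr (by norm_num)
    exact mul_left_cancel₀ hne1 h11
  -- final norm computation
  have hρalg : ∀ x : K, Algebra.norm F' (ρ x) = Algebra.norm F' x := fun x =>
    Algebra.norm_eq_of_algEquiv (AlgEquiv.ofRingEquiv (f := ρ) ρfix) x
  have hkey : Algebra.norm F' (S.coeff b 0)
      = (Algebra.norm F' ν * Algebra.norm F' (S.coeff b 0))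
        * Algebra.norm F' (S.coeff d1 0) := by
    conv_lhs => rw [hb0δ]
    rw [map_mul, ← hαω, hα, map_mul, hρalg]
  have hNb0 : Algebra.norm F' (S.coeff b 0) ≠ 0 := Algebra.norm_ne_zero_iff.mpr hb0ne
  apply hnorm
  have h12 : Algebra.norm F' (S.coeff b 0) * (Algebra.norm F' ν
      * Algebra.norm F' (S.coeff d1 0)) = Algebra.norm F' (S.coeff b 0) * 1 := by
    rw [mul_one]
    calc Algebra.norm F' (S.coeff b 0) * (Algebra.norm F' ν * Algebra.norm F' (S.coeff d1 0))
        = (Algebra.norm F' ν * Algebra.norm F' (S.coeff b 0)) * Algebra.norm F' (S.coeff d1 0) := by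
          ring
      _ = Algebra.norm F' (S.coeff b 0) := hkey.symm
  have h13 := mul_left_cancel₀ hNb0 h12
  rw [hNδa] at h13
  rw [mul_comm]
  exact h13



/-- Let `K/F` be a cyclic field extension of degree `n` with
`Gal(K/F) = ⟨σ⟩`, `R = K[t;σ]`, and `f ∈ R` monic irreducible of degree `m` with
`gcrd(f,t) = 1` and `deg(h) = mn`. Let `ν ∈ K`, `ρ ∈ Aut(K)`, `F' = Fix(ρ) ∩ F` with
`F/F'` finite. Then the algebra `S(ν,ρ,f) = (R_m,∘)`, with multiplication
`b∘c = (b + νρ(b₀)t^m)·c mod_r f`, is a division algebra over `F'` if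
`N_{K/F'}(a₀)·N_{K/F'}(ν) ≠ 1`. -/
theorem division_algebra_over_field_from_norm_condition
    {F K Rg : Type*} [Field F] [Field K] [Algebra F K] [IsGalois F K] [FiniteDimensional F K]
    (n : ℕ) (hn : Module.finrank F K = n)
    (σg : K ≃ₐ[F] K) (hgen : ∀ τ : K ≃ₐ[F] K, τ ∈ Subgroup.zpowers σg) (hordσ : orderOf σg = n)
    [Ring Rg] (S : SkewPolyData K Rg) (hσ : ∀ a : K, S.σ a = σg a)
    (modr : Rg → Rg → Rg) (hmodr : S.IsModR modr)
    (f : Rg) (m : ℕ) (hdegf : S.deg f = m) (hmonic : S.Monic f)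
    (hirr : S.Irred f) (hcop : S.CoprimeT f)
    (h : Rg) (hh : Polynomial F) (hmclm : S.IsMclm n 1 (algebraMap F K) f h hh)
    (hdegh : S.deg h = m * n)
    (ν : K) (ρ : K ≃+* K)
    (F' : Type*) [Field F'] [Algebra F' K] [FiniteDimensional F' K]
    (hF' : ∀ a : K, (∃ c : F', algebraMap F' K c = a) ↔ (σg a = a ∧ ρ a = a))
    (hnorm : Algebra.norm F' (S.const f) * Algebra.norm F' ν ≠ 1) :
    ∀ b c : Rg, S.deg b < m → S.deg c < m → b ≠ 0 → c ≠ 0 →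
      S.circ modr f ν ρ m b c ≠ 0 := by
  intro b c hb hc hbne hcne hzero
  obtain ⟨mm, rfl⟩ : ∃ mm, m = mm + 1 := ⟨m - 1, by omega⟩
  have hflead : S.coeff f (mm + 1) = 1 := by
    have hmon : S.coeff f (S.deg f) = 1 := hmonic
    rwa [hdegf] at hmon
  have σfix : ∀ e : F', S.σ (algebraMap F' K e) = algebraMap F' K e := fun e => by
    rw [hσ]
    exact ((hF' (algebraMap F' K e)).mp ⟨e, rfl⟩).1
  have ρfix : ∀ e : F', ρ (algebraMap F' K e) = algebraMap F' K e := fun e =>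
    ((hF' (algebraMap F' K e)).mp ⟨e, rfl⟩).2
  exact skew_key S σfix modr hmodr f mm hdegf hflead hirr ν ρ ρfix hnorm
    b c hb hc hbne hcne hzero
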